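/- Let 0 < γ' < γ ≤ 1. If u ∈ C^{0,γ}([0,π]×[0,2π]) has Fourier expansion Σ û(j,k) e^{2ijx+ikt} supported on j ≥ 0, k ≥ 0, then u ∈ H^{γ'}, with ‖u‖²_{H^{γ'}} := Σ (2|j| + |k|)^{2γ'} |û(j,k)|² ≤ C(γ,γ') ‖u‖²_{C^{0,γ}}. -/

import Mathlib

open Complex Finset Real

noncomputable def Eexp (p : ℤ × ℤ) (x t : ℝ) : ℂ :=
  Complex.exp (Complex.I * ((2 * (p.1 : ℝ) * x + (p.2 : ℝ) * t : ℝ) : ℂ))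

lemma norm_Eexp (p : ℤ × ℤ) (x t : ℝ) : ‖Eexp p x t‖ = 1 := by
  simp [Eexp, Complex.norm_exp]

lemma norm_exp_I_mul (r : ℝ) : ‖Complex.exp (Complex.I * (r : ℂ))‖ = 1 := by
  simp [Complex.norm_exp]

noncomputable def rot (N : ℕ) (m : ℤ) : ℂ :=
  Complex.exp (2 * Real.pi * Complex.I * m / N)

lemma rot_add (N : ℕ) (hN : 0 < N) (m m' : ℤ) : rot N m * rot N m' = rot N (m + m') := by
  rw [rot, rot, rot, ← Complex.exp_add]
  congr 1
  have : (N : ℂ) ≠ 0 := by exact_mod_cast hN.ne'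
  field_simp
  push_cast
  ring

lemma rot_zero (N : ℕ) : rot N 0 = 1 := by simp [rot]

lemma conj_rot (N : ℕ) (m : ℤ) : (starRingEnd ℂ) (rot N m) = rot N (-m) := by
  rw [rot, rot, ← Complex.exp_conj]
  congr 1
  simp only [map_div₀, map_mul, map_ofNat, Complex.conj_I, Complex.conj_ofReal, map_intCast,
    map_natCast]
  push_cast
  ring

lemma sum_rot_pow (N : ℕ) (hN : 0 < N) (m : ℤ) (hm : m.natAbs < N) :
    ∑ a ∈ Finset.range N, rot N m ^ a = if m = 0 then (N : ℂ) else 0 := by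
  by_cases h : m = 0
  · simp [h, rot_zero]
  · rw [if_neg h]
    have hNC : (N : ℂ) ≠ 0 := by exact_mod_cast hN.ne'
    have hr1 : rot N m ≠ 1 := by
      intro hr
      rw [rot, Complex.exp_eq_one_iff] at hr
      obtain ⟨n, hn⟩ := hr
      have h2pi : (2 * (Real.pi : ℂ) * Complex.I) ≠ 0 := by
        simp [Complex.I_ne_zero, Real.pi_ne_zero, Complex.ofReal_ne_zero]
      have : (m : ℂ) = n * N := by
        field_simp at hn
        have h' : (2 * (Real.pi : ℂ) * Complex.I) * m
            = (2 * (Real.pi : ℂ) * Complex.I) * (n * N) := by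
          ring_nf
          ring_nf at hn
          rw [hn]; ring
        exact mul_left_cancel₀ h2pi h'
      have hm' : m = n * N := by exact_mod_cast this
      rcases eq_or_ne n 0 with h0 | h0
      · exact h (by simp [hm', h0])
      · have h1 : m.natAbs = n.natAbs * N := by
          rw [hm', Int.natAbs_mul, Int.natAbs_natCast]
        have h2 : 1 ≤ n.natAbs := Int.natAbs_pos.mpr h0
        nlinarith [hm]
    have hrN : rot N m ^ N = 1 := by
      rw [rot, ← Complex.exp_nat_mul]
      have : (N : ℂ) * (2 * Real.pi * Complex.I * m / N) = m * (2 * Real.pi * Complex.I) := by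
        field_simp
      rw [this, Complex.exp_int_mul_two_pi_mul_I]
    rw [geom_sum_eq hr1, hrN]
    simp

lemma Eexp_grid (N : ℕ) (hN : 0 < N) (p : ℤ × ℤ) (a b : ℕ) :
    Eexp p (Real.pi * a / N) (2 * Real.pi * b / N) = rot N p.1 ^ a * rot N p.2 ^ b := by
  rw [rot, rot, ← Complex.exp_nat_mul, ← Complex.exp_nat_mul, ← Complex.exp_add, Eexp]
  congr 1
  have hNC : (N : ℂ) ≠ 0 := by exact_mod_cast hN.ne'
  push_cast
  field_simp

lemma parseval_finset (G : Finset (ℤ × ℤ)) (c : ℤ × ℤ → ℂ) (M : ℝ)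
    (hb : ∀ x t : ℝ, ‖∑ p ∈ G, c p * Eexp p x t‖ ≤ M) :
    ∑ p ∈ G, ‖c p‖ ^ 2 ≤ M ^ 2 := by
  obtain ⟨N, hN, hspread⟩ : ∃ N : ℕ, 0 < N ∧ ∀ p ∈ G, ∀ q ∈ G,
      (p.1 - q.1).natAbs < N ∧ (p.2 - q.2).natAbs < N := by
    refine ⟨2 * G.sup (fun p => max p.1.natAbs p.2.natAbs) + 1, Nat.succ_pos _, ?_⟩
    intro p hp q hq
    have h1 := Finset.le_sup (f := fun p : ℤ × ℤ => max p.1.natAbs p.2.natAbs) hp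
    have h2 := Finset.le_sup (f := fun p : ℤ × ℤ => max p.1.natAbs p.2.natAbs) hq
    have e1 := Int.natAbs_sub_le p.1 q.1
    have e2 := Int.natAbs_sub_le p.2 q.2
    simp only [le_max_iff, max_le_iff] at h1 h2
    omega
  set P : ℕ → ℕ → ℂ := fun a b => ∑ p ∈ G, c p * (rot N p.1 ^ a * rot N p.2 ^ b) with hP
  have hPbound : ∀ a b : ℕ, ‖P a b‖ ≤ M := by
    intro a b
    have : P a b = ∑ p ∈ G, c p * Eexp p (Real.pi * a / N) (2 * Real.pi * b / N) := by
      refine Finset.sum_congr rfl fun p _ => ?_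
      rw [Eexp_grid N hN]
    rw [this]; exact hb _ _
  have hM0 : 0 ≤ M := le_trans (norm_nonneg _) (hPbound 0 0)
  have keyC : ∑ a ∈ range N, ∑ b ∈ range N, (P a b * (starRingEnd ℂ) (P a b))
      = (N : ℂ) ^ 2 * ∑ p ∈ G, ((‖c p‖ ^ 2 : ℝ) : ℂ) := by
    have expand : ∀ a b : ℕ, P a b * (starRingEnd ℂ) (P a b)
        = ∑ p ∈ G, ∑ q ∈ G, (c p * (starRingEnd ℂ) (c q)) *
            (rot N (p.1 - q.1) ^ a * rot N (p.2 - q.2) ^ b) := by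
      intro a b
      rw [hP]
      simp only [map_sum, map_mul, map_pow, conj_rot]
      rw [Finset.sum_mul_sum]
      refine Finset.sum_congr rfl fun p _ => Finset.sum_congr rfl fun q _ => ?_
      rw [sub_eq_add_neg, sub_eq_add_neg, ← rot_add N hN, ← rot_add N hN, mul_pow, mul_pow]
      ring
    calc ∑ a ∈ range N, ∑ b ∈ range N, (P a b * (starRingEnd ℂ) (P a b))
        = ∑ a ∈ range N, ∑ b ∈ range N, ∑ p ∈ G, ∑ q ∈ G,
            (c p * (starRingEnd ℂ) (c q)) *
            (rot N (p.1 - q.1) ^ a * rot N (p.2 - q.2) ^ b) := by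
          exact Finset.sum_congr rfl fun a _ => Finset.sum_congr rfl fun b _ => expand a b
      _ = ∑ a ∈ range N, ∑ p ∈ G, ∑ b ∈ range N, ∑ q ∈ G, _ := by
          exact Finset.sum_congr rfl fun a _ => Finset.sum_comm
      _ = ∑ p ∈ G, ∑ a ∈ range N, ∑ b ∈ range N, ∑ q ∈ G, _ := Finset.sum_comm
      _ = ∑ p ∈ G, ∑ a ∈ range N, ∑ q ∈ G, ∑ b ∈ range N, _ := by
          exact Finset.sum_congr rfl fun p _ => Finset.sum_congr rfl fun a _ => Finset.sum_comm
      _ = ∑ p ∈ G, ∑ q ∈ G, ∑ a ∈ range N, ∑ b ∈ range N,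
            (c p * (starRingEnd ℂ) (c q)) *
            (rot N (p.1 - q.1) ^ a * rot N (p.2 - q.2) ^ b) := by
          exact Finset.sum_congr rfl fun p _ => Finset.sum_comm
      _ = ∑ p ∈ G, ∑ q ∈ G, (c p * (starRingEnd ℂ) (c q)) *
            ((∑ a ∈ range N, rot N (p.1 - q.1) ^ a) *
             (∑ b ∈ range N, rot N (p.2 - q.2) ^ b)) := by
          refine Finset.sum_congr rfl fun p _ => Finset.sum_congr rfl fun q _ => ?_
          rw [Finset.sum_mul_sum]
          simp only [Finset.mul_sum]
      _ = ∑ p ∈ G, (c p * (starRingEnd ℂ) (c p)) * ((N : ℂ) * (N : ℂ)) := by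
          refine Finset.sum_congr rfl fun p hp => ?_
          rw [Finset.sum_eq_single_of_mem p hp]
          · rw [sum_rot_pow N hN _ (by simpa using (hspread p hp p hp).1),
              sum_rot_pow N hN _ (by simpa using (hspread p hp p hp).2)]
            simp
          · intro q hq hqp
            rw [sum_rot_pow N hN _ (hspread p hp q hq).1,
              sum_rot_pow N hN _ (hspread p hp q hq).2]
            by_cases h1 : p.1 - q.1 = 0
            · have h2 : p.2 - q.2 ≠ 0 := by
                intro h2
                exact hqp (Prod.ext_iff.mpr ⟨by omega, by omega⟩).symm
              simp [h2]
            · simp [h1]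
      _ = (N : ℂ) ^ 2 * ∑ p ∈ G, ((‖c p‖ ^ 2 : ℝ) : ℂ) := by
          rw [Finset.mul_sum]
          refine Finset.sum_congr rfl fun p _ => ?_
          rw [Complex.mul_conj, Complex.normSq_eq_norm_sq]
          push_cast
          ring
  have keyR : ∑ a ∈ range N, ∑ b ∈ range N, ‖P a b‖ ^ 2 = (N : ℝ) ^ 2 * ∑ p ∈ G, ‖c p‖ ^ 2 := by
    have h2 : ((∑ a ∈ range N, ∑ b ∈ range N, ‖P a b‖ ^ 2 : ℝ) : ℂ)
        = (((N : ℝ) ^ 2 * ∑ p ∈ G, ‖c p‖ ^ 2 : ℝ) : ℂ) := by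
      push_cast
      push_cast at keyC
      rw [← keyC]
      refine Finset.sum_congr rfl fun a _ => Finset.sum_congr rfl fun b _ => ?_
      rw [Complex.mul_conj, Complex.normSq_eq_norm_sq]
      push_cast
      rfl
    exact_mod_cast h2
  have hsum_le : ∑ a ∈ range N, ∑ b ∈ range N, ‖P a b‖ ^ 2 ≤ (N : ℝ) ^ 2 * M ^ 2 := by
    calc ∑ a ∈ range N, ∑ b ∈ range N, ‖P a b‖ ^ 2
        ≤ ∑ _a ∈ range N, ∑ _b ∈ range N, M ^ 2 := by
          refine Finset.sum_le_sum fun a _ => Finset.sum_le_sum fun b _ => ?_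
          exact pow_le_pow_left₀ (norm_nonneg _) (hPbound a b) 2
      _ = (N : ℝ) ^ 2 * M ^ 2 := by
          simp [Finset.sum_const]
          ring
  have hN2 : (0 : ℝ) < (N : ℝ) ^ 2 := by positivity
  have := keyR ▸ hsum_le
  exact le_of_mul_le_mul_left (by linarith) hN2

lemma bessel (c : ℤ × ℤ → ℂ) (M : ℝ) (hM : 0 ≤ M) (hc : Summable fun p => ‖c p‖)
    (hb : ∀ x t : ℝ, ‖∑' p : ℤ × ℤ, c p * Eexp p x t‖ ≤ M) (F : Finset (ℤ × ℤ)) :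
    ∑ p ∈ F, ‖c p‖ ^ 2 ≤ M ^ 2 := by
  have hsummable : ∀ x t : ℝ, Summable fun p : ℤ × ℤ => c p * Eexp p x t := by
    intro x t
    refine Summable.of_norm ?_
    refine hc.congr fun p => ?_
    rw [norm_mul, norm_Eexp, mul_one]
  refine le_of_forall_pos_le_add fun δ hδ => ?_
  set ε : ℝ := min 1 (δ / (2 * M + 1)) with hε
  have hε0 : 0 < ε := lt_min one_pos (by positivity)
  obtain ⟨G₀, hG₀⟩ : ∃ G₀ : Finset (ℤ × ℤ), ∀ G ≥ G₀,
      dist (∑ p ∈ G, ‖c p‖) (∑' p, ‖c p‖) < ε := by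
    have := Metric.tendsto_atTop.mp hc.hasSum
    obtain ⟨G₀, h⟩ := this ε hε0
    exact ⟨G₀, h⟩
  set G : Finset (ℤ × ℤ) := F ∪ G₀ with hG
  have htail : ∑' p : ↑(↑G : Set (ℤ × ℤ))ᶜ, ‖c p.1‖ ≤ ε := by
    have h1 := Summable.sum_add_tsum_compl (s := G) hc
    have h2 := hG₀ G (Finset.subset_union_right)
    rw [Real.dist_eq, abs_sub_lt_iff] at h2
    linarith [h2.2]
  have hPbound : ∀ x t : ℝ, ‖∑ p ∈ G, c p * Eexp p x t‖ ≤ M + ε := by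
    intro x t
    have h1 := Summable.sum_add_tsum_compl (s := G) (hsummable x t)
    have h2 : ‖∑' p : ↑(↑G : Set (ℤ × ℤ))ᶜ, c p.1 * Eexp p.1 x t‖
        ≤ ∑' p : ↑(↑G : Set (ℤ × ℤ))ᶜ, ‖c p.1‖ := by
      have hs : Summable fun p : ↑(↑G : Set (ℤ × ℤ))ᶜ => ‖c p.1 * Eexp p.1 x t‖ := by
        refine (hc.subtype _).congr fun p => ?_
        exact (by rw [norm_mul, norm_Eexp, mul_one] : ‖c p.1 * Eexp p.1 x t‖ = ‖c p.1‖).symm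
      have := norm_tsum_le_tsum_norm hs
      refine le_trans this (le_of_eq ?_)
      exact tsum_congr fun p => by rw [norm_mul, norm_Eexp, mul_one]
    have h3 : ∑ p ∈ G, c p * Eexp p x t
        = (∑' p : ℤ × ℤ, c p * Eexp p x t)
          - ∑' p : ↑(↑G : Set (ℤ × ℤ))ᶜ, c p.1 * Eexp p.1 x t :=
      eq_sub_of_add_eq h1
    rw [h3]
    calc ‖(∑' p : ℤ × ℤ, c p * Eexp p x t)
          - ∑' p : ↑(↑G : Set (ℤ × ℤ))ᶜ, c p.1 * Eexp p.1 x t‖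
        ≤ ‖∑' p : ℤ × ℤ, c p * Eexp p x t‖
          + ‖∑' p : ↑(↑G : Set (ℤ × ℤ))ᶜ, c p.1 * Eexp p.1 x t‖ := norm_sub_le _ _
      _ ≤ M + ε := add_le_add (hb x t) (le_trans h2 htail)
  have hG2 := parseval_finset G c (M + ε) hPbound
  have hFG : ∑ p ∈ F, ‖c p‖ ^ 2 ≤ ∑ p ∈ G, ‖c p‖ ^ 2 := by
    refine Finset.sum_le_sum_of_subset_of_nonneg Finset.subset_union_left
      fun p _ _ => by positivity
  have hε1 : ε ≤ 1 := min_le_left _ _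
  have hε2 : ε ≤ δ / (2 * M + 1) := min_le_right _ _
  have : (M + ε) ^ 2 ≤ M ^ 2 + δ := by
    have h2M : 0 < 2 * M + 1 := by linarith
    have := (le_div_iff₀ h2M).mp hε2
    nlinarith
  linarith

lemma cos_le_neg_half {θ : ℝ} (h1 : 2 * π / 3 ≤ θ) (h2 : θ ≤ 4 * π / 3) :
    Real.cos θ ≤ -(1/2) := by
  have hpi := Real.pi_pos
  have hval : Real.cos (2 * π / 3) = -(1/2) := by
    have : (2 : ℝ) * π / 3 = π - π / 3 := by ring
    rw [this, Real.cos_pi_sub, Real.cos_pi_div_three]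
  by_cases hθ : θ ≤ π
  · have := Real.cos_le_cos_of_nonneg_of_le_pi (by positivity) hθ h1
    linarith [this, hval.le]
  · have hsub : Real.cos (2 * π - θ) = Real.cos θ := by
      rw [Real.cos_two_pi_sub]
    have h1' : 2 * π / 3 ≤ 2 * π - θ := by linarith
    have h2' : 2 * π - θ ≤ π := by linarith
    have := Real.cos_le_cos_of_nonneg_of_le_pi (by positivity) h2' h1'
    rw [hsub] at this
    linarith [hval.le]

lemma norm_exp_sub_one_sq {θ : ℝ} (h1 : 2 * π / 3 ≤ θ) (h2 : θ ≤ 4 * π / 3) :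
    3 ≤ ‖Complex.exp (Complex.I * θ) - 1‖ ^ 2 := by
  have hre : (Complex.exp (Complex.I * θ) - 1).re = Real.cos θ - 1 := by
    simp [Complex.exp_re, Complex.mul_re, Complex.mul_im]
  have him : (Complex.exp (Complex.I * θ) - 1).im = Real.sin θ := by
    simp [Complex.exp_im, Complex.mul_re, Complex.mul_im]
  have hnorm : ‖Complex.exp (Complex.I * θ) - 1‖ ^ 2
      = (Real.cos θ - 1) ^ 2 + (Real.sin θ) ^ 2 := by
    rw [Complex.sq_norm, Complex.normSq_apply, hre, him]
    ring
  rw [hnorm]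
  have hcos := cos_le_neg_half h1 h2
  nlinarith [Real.sin_sq_add_cos_sq θ]

lemma Eexp_translate (p : ℤ × ℤ) (x t hh : ℝ) :
    Eexp p (x + hh) (t + hh)
      = Complex.exp (Complex.I * (((2 * (p.1 : ℝ) + (p.2 : ℝ)) * hh : ℝ) : ℂ)) * Eexp p x t := by
  rw [Eexp, Eexp, ← Complex.exp_add]
  congr 1
  push_cast
  ring

lemma rpow_pow_comm {x : ℝ} (hx : 0 ≤ x) (y : ℝ) (m : ℕ) : (x ^ m) ^ y = (x ^ y) ^ m := by
  rw [← Real.rpow_natCast x m, ← Real.rpow_mul hx, mul_comm, Real.rpow_mul hx,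
    Real.rpow_natCast]

/-- If u ∈ C^{0,γ} has Fourier expansion supported in the quadrant j ≥ 0, k ≥ 0,
then u ∈ H^{γ'} for 0 < γ' < γ ≤ 1, with
Σ (2|j|+|k|)^{2γ'}|û(j,k)|² ≤ C(γ,γ')·‖u‖²_{C^{0,γ}}. -/
theorem stmt11 (γ γ' : ℝ) (h0 : 0 < γ') (h1 : γ' < γ) (h2 : γ ≤ 1) :
    ∃ C : ℝ, 0 < C ∧ ∀ (uhat : ℤ × ℤ → ℂ) (u : ℝ × ℝ → ℂ) (K : ℝ), 0 ≤ K →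
      (∀ jk : ℤ × ℤ, ¬(0 ≤ jk.1 ∧ 0 ≤ jk.2) → uhat jk = 0) →
      (∀ x t : ℝ, Summable (fun jk : ℤ × ℤ => uhat jk *
        Complex.exp (Complex.I * ((2 * (jk.1 : ℝ) * x + (jk.2 : ℝ) * t : ℝ) : ℂ)))) →
      (∀ x t : ℝ, u (x, t) = ∑' jk : ℤ × ℤ, uhat jk *
        Complex.exp (Complex.I * ((2 * (jk.1 : ℝ) * x + (jk.2 : ℝ) * t : ℝ) : ℂ))) →
      (∀ z : ℝ × ℝ, ‖u z‖ ≤ K) →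
      (∀ z w : ℝ × ℝ, ‖u z - u w‖ ≤ K * dist z w ^ γ) →
      Summable (fun jk : ℤ × ℤ =>
        ((2 * |jk.1| + |jk.2| : ℤ) : ℝ) ^ (2 * γ') * ‖uhat jk‖ ^ 2) ∧
      ∑' jk : ℤ × ℤ, ((2 * |jk.1| + |jk.2| : ℤ) : ℝ) ^ (2 * γ') * ‖uhat jk‖ ^ 2 ≤
        C * K ^ 2 := by
  classical
  have hπ := Real.pi_pos
  have hr0 : (0 : ℝ) < (2 : ℝ) ^ (2 * γ') := Real.rpow_pos_of_pos two_pos _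
  have hs0 : (0 : ℝ) < (2 : ℝ) ^ (2 * γ) := Real.rpow_pos_of_pos two_pos _
  set q : ℝ := (2 : ℝ) ^ (2 * γ') / (2 : ℝ) ^ (2 * γ) with hqdef
  have hq0 : 0 < q := by positivity
  have hq1 : q < 1 := by
    rw [hqdef, div_lt_one hs0]
    exact Real.rpow_lt_rpow_of_exponent_lt one_lt_two (by linarith)
  set B : ℝ := (2 : ℝ) ^ (2 * γ') * (2 * π / 3) ^ (2 * γ) / 3 with hBdef
  have hB0 : 0 < B := by
    have : (0 : ℝ) < (2 * π / 3) ^ (2 * γ) := Real.rpow_pos_of_pos (by positivity) _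
    positivity
  set C : ℝ := B * (1 - q)⁻¹ with hCdef
  have hC0 : 0 < C := by
    have : 0 < 1 - q := by linarith
    positivity
  refine ⟨C, hC0, ?_⟩
  intro uhat u K hK hquad hsum hu hbound hHolder
  have huhat_sum : Summable fun p : ℤ × ℤ => ‖uhat p‖ := by
    have h0' : Summable uhat := by
      refine (hsum 0 0).congr fun p => ?_
      simp
    exact h0'.norm
  -- Step B : for every shift hh and finset F, Bessel for translated-difference coefficients
  have key : ∀ (hh : ℝ) (F : Finset (ℤ × ℤ)),
      ∑ p ∈ F, ‖uhat p *
        (Complex.exp (Complex.I * (((2 * (p.1 : ℝ) + (p.2 : ℝ)) * hh : ℝ) : ℂ)) - 1)‖ ^ 2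
      ≤ (K * |hh| ^ γ) ^ 2 := by
    intro hh F
    have hM : (0 : ℝ) ≤ K * |hh| ^ γ := by positivity
    refine bessel _ _ hM ?_ ?_ F
    · refine Summable.of_nonneg_of_le (fun p => norm_nonneg _) (fun p => ?_)
        (huhat_sum.mul_left 2)
      rw [norm_mul]
      have hle : ‖Complex.exp (Complex.I * (((2 * (p.1 : ℝ) + (p.2 : ℝ)) * hh : ℝ) : ℂ)) - 1‖
          ≤ 2 := by
        calc ‖Complex.exp (Complex.I * (((2 * (p.1 : ℝ) + (p.2 : ℝ)) * hh : ℝ) : ℂ)) - 1‖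
            ≤ ‖Complex.exp (Complex.I * (((2 * (p.1 : ℝ) + (p.2 : ℝ)) * hh : ℝ) : ℂ))‖ + ‖(1 : ℂ)‖ :=
              norm_sub_le _ _
          _ = 2 := by rw [norm_exp_I_mul, norm_one]; norm_num
      calc ‖uhat p‖ * ‖Complex.exp (Complex.I * (((2 * (p.1 : ℝ) + (p.2 : ℝ)) * hh : ℝ) : ℂ)) - 1‖
          ≤ ‖uhat p‖ * 2 := by
            exact mul_le_mul_of_nonneg_left hle (norm_nonneg _)
        _ = 2 * ‖uhat p‖ := by ring
    · intro x t
      simp only [Eexp]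
      have hv : (∑' p : ℤ × ℤ, uhat p *
            (Complex.exp (Complex.I * (((2 * (p.1 : ℝ) + (p.2 : ℝ)) * hh : ℝ) : ℂ)) - 1)
            * Complex.exp (Complex.I * ((2 * (p.1 : ℝ) * x + (p.2 : ℝ) * t : ℝ) : ℂ)))
          = u (x + hh, t + hh) - u (x, t) := by
        rw [hu (x + hh) (t + hh), hu x t,
          ← Summable.tsum_sub (hsum (x + hh) (t + hh)) (hsum x t)]
        refine tsum_congr fun p => ?_
        have hsplit : Complex.exp (Complex.I *
              ((2 * (p.1 : ℝ) * (x + hh) + (p.2 : ℝ) * (t + hh) : ℝ) : ℂ))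
            = Complex.exp (Complex.I * (((2 * (p.1 : ℝ) + (p.2 : ℝ)) * hh : ℝ) : ℂ))
              * Complex.exp (Complex.I * ((2 * (p.1 : ℝ) * x + (p.2 : ℝ) * t : ℝ) : ℂ)) := by
          rw [← Complex.exp_add]
          congr 1
          push_cast
          ring
        rw [hsplit]
        ring
      rw [hv]
      have hd := hHolder (x + hh, t + hh) (x, t)
      have hdist : dist ((x + hh, t + hh) : ℝ × ℝ) ((x, t) : ℝ × ℝ) = |hh| := by
        rw [Prod.dist_eq]
        simp [Real.dist_eq, add_sub_cancel_left]
      rw [hdist] at hd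
      exact hd
  -- Step C : per-block estimate
  have block : ∀ (m : ℕ) (F : Finset (ℤ × ℤ)),
      (∀ p ∈ F, 0 ≤ p.1 ∧ 0 ≤ p.2 ∧ ((2 : ℤ) ^ m ≤ 2 * p.1 + p.2)
        ∧ (2 * p.1 + p.2 ≤ (2 : ℤ) ^ (m + 1))) →
      ∑ p ∈ F, ((2 * |p.1| + |p.2| : ℤ) : ℝ) ^ (2 * γ') * ‖uhat p‖ ^ 2
        ≤ K ^ 2 * B * q ^ m := by
    intro m F hF
    have h2m : (0 : ℝ) < 2 ^ m := by positivity
    set hh : ℝ := (2 * π / 3) / 2 ^ m with hthdef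
    have hhh0 : 0 < hh := by positivity
    have habs : |hh| = hh := abs_of_pos hhh0
    have hterm : ∀ p ∈ F,
        ((2 * |p.1| + |p.2| : ℤ) : ℝ) ^ (2 * γ') * ‖uhat p‖ ^ 2
        ≤ ((2 : ℝ) ^ (m + 1)) ^ (2 * γ') * ((1 : ℝ)/3) *
          ‖uhat p * (Complex.exp (Complex.I *
            (((2 * (p.1 : ℝ) + (p.2 : ℝ)) * hh : ℝ) : ℂ)) - 1)‖ ^ 2 := by
      intro p hp
      obtain ⟨hj, hk, hlo, hhi⟩ := hF p hp
      have habs1 : |p.1| = p.1 := abs_of_nonneg hj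
      have habs2 : |p.2| = p.2 := abs_of_nonneg hk
      -- the angle
      set θ : ℝ := (2 * (p.1 : ℝ) + (p.2 : ℝ)) * hh with hθdef
      have hn_lo : (2 : ℝ) ^ m ≤ 2 * (p.1 : ℝ) + (p.2 : ℝ) := by exact_mod_cast hlo
      have hn_hi : 2 * (p.1 : ℝ) + (p.2 : ℝ) ≤ (2 : ℝ) ^ (m + 1) := by exact_mod_cast hhi
      have hm_eq : (2 : ℝ) ^ m * hh = 2 * π / 3 := by
        rw [hthdef]; field_simp
      have hm1_eq : (2 : ℝ) ^ (m + 1) * hh = 4 * π / 3 := by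
        rw [hthdef, pow_succ]
        field_simp
        ring
      have hθlo : 2 * π / 3 ≤ θ := by
        rw [← hm_eq, hθdef]
        exact mul_le_mul_of_nonneg_right hn_lo hhh0.le
      have hθhi : θ ≤ 4 * π / 3 := by
        rw [← hm1_eq, hθdef]
        exact mul_le_mul_of_nonneg_right hn_hi hhh0.le
      have hexp : 3 ≤ ‖Complex.exp (Complex.I * (θ : ℂ)) - 1‖ ^ 2 :=
        norm_exp_sub_one_sq hθlo hθhi
      -- weight bound
      have hwb : ((2 * |p.1| + |p.2| : ℤ) : ℝ) ^ (2 * γ') ≤ ((2 : ℝ) ^ (m + 1)) ^ (2 * γ') := by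
        apply Real.rpow_le_rpow
        · positivity
        · rw [habs1, habs2]
          push_cast
          exact hn_hi
        · positivity
      -- norm bound
      have hnb : ‖uhat p‖ ^ 2 ≤ (1/3 : ℝ) *
          ‖uhat p * (Complex.exp (Complex.I * ((θ : ℝ) : ℂ)) - 1)‖ ^ 2 := by
        rw [norm_mul, mul_pow]
        nlinarith [norm_nonneg (uhat p), sq_nonneg (‖uhat p‖)]
      calc ((2 * |p.1| + |p.2| : ℤ) : ℝ) ^ (2 * γ') * ‖uhat p‖ ^ 2
          ≤ ((2 : ℝ) ^ (m + 1)) ^ (2 * γ') * ((1/3 : ℝ) *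
            ‖uhat p * (Complex.exp (Complex.I * ((θ : ℝ) : ℂ)) - 1)‖ ^ 2) := by
            apply mul_le_mul hwb hnb (by positivity) (by positivity)
        _ = ((2 : ℝ) ^ (m + 1)) ^ (2 * γ') * ((1 : ℝ)/3) *
            ‖uhat p * (Complex.exp (Complex.I * ((θ : ℝ) : ℂ)) - 1)‖ ^ 2 := by ring
    calc ∑ p ∈ F, ((2 * |p.1| + |p.2| : ℤ) : ℝ) ^ (2 * γ') * ‖uhat p‖ ^ 2
        ≤ ∑ p ∈ F, ((2 : ℝ) ^ (m + 1)) ^ (2 * γ') * ((1 : ℝ)/3) *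
          ‖uhat p * (Complex.exp (Complex.I *
            (((2 * (p.1 : ℝ) + (p.2 : ℝ)) * hh : ℝ) : ℂ)) - 1)‖ ^ 2 :=
          Finset.sum_le_sum hterm
      _ = ((2 : ℝ) ^ (m + 1)) ^ (2 * γ') * ((1 : ℝ)/3) *
          ∑ p ∈ F, ‖uhat p * (Complex.exp (Complex.I *
            (((2 * (p.1 : ℝ) + (p.2 : ℝ)) * hh : ℝ) : ℂ)) - 1)‖ ^ 2 := by
          rw [Finset.mul_sum]
      _ ≤ ((2 : ℝ) ^ (m + 1)) ^ (2 * γ') * ((1 : ℝ)/3) * (K * |hh| ^ γ) ^ 2 := by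
          apply mul_le_mul_of_nonneg_left (key hh F) (by positivity)
      _ = K ^ 2 * B * q ^ m := by
          rw [habs]
          -- rpow algebra
          have e1 : (K * hh ^ γ) ^ 2 = K ^ 2 * hh ^ (2 * γ) := by
            rw [mul_pow]
            congr 1
            rw [← Real.rpow_natCast (hh ^ γ) 2, ← Real.rpow_mul hhh0.le]
            norm_num
            rw [mul_comm]
          have e2 : hh ^ (2 * γ) = (2 * π / 3) ^ (2 * γ) / ((2 : ℝ) ^ (2 * γ)) ^ m := by
            rw [hthdef, Real.div_rpow (by positivity) (by positivity)]
            rw [← Real.rpow_pow_comm (by norm_num : (0:ℝ) ≤ 2)]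
          have e3 : ((2 : ℝ) ^ (m + 1)) ^ (2 * γ') = (2 : ℝ) ^ (2 * γ') * ((2 : ℝ) ^ (2 * γ')) ^ m := by
            rw [← Real.rpow_pow_comm (by norm_num : (0:ℝ) ≤ 2) (2 * γ') (m + 1), pow_succ]
            ring
          rw [e1, e2, e3, hBdef, hqdef, div_pow]
          have hsm : ((2 : ℝ) ^ (2 * γ)) ^ m ≠ 0 := by positivity
          field_simp
  -- assemble over all blocks
  set g : ℤ × ℤ → ℝ := fun p => ((2 * |p.1| + |p.2| : ℤ) : ℝ) ^ (2 * γ') * ‖uhat p‖ ^ 2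
    with hgdef
  have hgnonneg : ∀ p, 0 ≤ g p := by
    intro p
    have : (0:ℝ) ≤ ((2 * |p.1| + |p.2| : ℤ) : ℝ) := by positivity
    positivity
  have main : ∀ F : Finset (ℤ × ℤ), ∑ p ∈ F, g p ≤ C * K ^ 2 := by
    intro F
    set Mx : ℕ := (F.sup fun p => (2 * p.1 + p.2).toNat) + 1 with hMx
    set pred : ℕ → ℤ × ℤ → Prop := fun m p =>
      0 ≤ p.1 ∧ 0 ≤ p.2 ∧ (2 : ℤ) ^ m ≤ 2 * p.1 + p.2 ∧ 2 * p.1 + p.2 < (2 : ℤ) ^ (m + 1)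
      with hpred
    set F' : Finset (ℤ × ℤ) := (Finset.range Mx).biUnion (fun m => F.filter (pred m)) with hF'
    have hdisj : (↑(Finset.range Mx) : Set ℕ).PairwiseDisjoint (fun m => F.filter (pred m)) := by
      intro m _ m' _ hmm'
      simp only [Function.onFun]
      rw [Finset.disjoint_left]
      intro p hp hp'
      rw [Finset.mem_filter] at hp hp'
      obtain ⟨-, -, -, hA, hB⟩ := hp
      obtain ⟨-, -, -, hA', hB'⟩ := hp'
      rcases lt_or_gt_of_ne hmm' with hlt | hlt
      · have : (2 : ℤ) ^ (m + 1) ≤ (2 : ℤ) ^ m' := pow_le_pow_right₀ (by norm_num) hlt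
        omega
      · have : (2 : ℤ) ^ (m' + 1) ≤ (2 : ℤ) ^ m := pow_le_pow_right₀ (by norm_num) hlt
        omega
    have hsub : F' ⊆ F := by
      rw [hF']
      intro p hp
      rw [Finset.mem_biUnion] at hp
      obtain ⟨m, -, hm⟩ := hp
      exact Finset.mem_of_mem_filter p hm
    have hzero : ∀ p ∈ F, p ∉ F' → g p = 0 := by
      intro p hpF hpF'
      by_contra hg
      -- p is in the quadrant
      have hquadp : 0 ≤ p.1 ∧ 0 ≤ p.2 := by
        by_contra hq
        exact hg (by rw [hgdef]; simp [hquad p hq])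
      obtain ⟨hj, hk⟩ := hquadp
      set n : ℤ := 2 * p.1 + p.2 with hn
      have hn0 : 0 ≤ n := by omega
      have hnpos : 1 ≤ n := by
        rcases eq_or_lt_of_le hn0 with h | h
        · exfalso
          apply hg
          rw [hgdef]
          have : 2 * |p.1| + |p.2| = 0 := by
            rw [abs_of_nonneg hj, abs_of_nonneg hk]; omega
          simp only [this]
          rw [Int.cast_zero, Real.zero_rpow (by positivity), zero_mul]
        · omega
      set m : ℕ := Nat.log 2 n.toNat with hm
      have hn1 : 2 ^ m ≤ n.toNat := Nat.pow_log_le_self 2 (by omega)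
      have hn2 : n.toNat < 2 ^ (m + 1) := Nat.lt_pow_succ_log_self one_lt_two _
      have hmMx : m < Mx := by
        have h1' : m < 2 ^ m := Nat.lt_two_pow_self
        have h2' : n.toNat ≤ F.sup fun p => (2 * p.1 + p.2).toNat := by
          have h4 := Finset.le_sup (f := fun p : ℤ × ℤ => (2 * p.1 + p.2).toNat) hpF
          exact h4
        omega
      apply hpF'
      rw [hF', Finset.mem_biUnion]
      refine ⟨m, Finset.mem_range.mpr hmMx, ?_⟩
      rw [Finset.mem_filter]
      refine ⟨hpF, hj, hk, ?_, ?_⟩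
      · have : ((2 : ℕ) ^ m : ℤ) ≤ ((n.toNat : ℕ) : ℤ) := by exact_mod_cast hn1
        rw [Int.toNat_of_nonneg hn0] at this
        exact_mod_cast this
      · have : ((n.toNat : ℕ) : ℤ) < ((2 : ℕ) ^ (m + 1) : ℤ) := by exact_mod_cast hn2
        rw [Int.toNat_of_nonneg hn0] at this
        exact_mod_cast this
    have hsum_eq : ∑ p ∈ F, g p = ∑ p ∈ F', g p := (Finset.sum_subset hsub hzero).symm
    rw [hsum_eq, hF', Finset.sum_biUnion hdisj]
    calc ∑ m ∈ Finset.range Mx, ∑ p ∈ F.filter (pred m), g p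
        ≤ ∑ m ∈ Finset.range Mx, K ^ 2 * B * q ^ m := by
          refine Finset.sum_le_sum fun m _ => ?_
          refine block m (F.filter (pred m)) fun p hp => ?_
          rw [Finset.mem_filter] at hp
          obtain ⟨-, ha, hb, hc', hd⟩ := hp
          exact ⟨ha, hb, hc', hd.le⟩
      _ = K ^ 2 * B * ∑ m ∈ Finset.range Mx, q ^ m := by rw [Finset.mul_sum]
      _ ≤ K ^ 2 * B * (1 - q)⁻¹ := by
          apply mul_le_mul_of_nonneg_left _ (by positivity)
          calc ∑ m ∈ Finset.range Mx, q ^ m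
              ≤ ∑' m : ℕ, q ^ m :=
                Summable.sum_le_tsum _ (fun m _ => by positivity)
                  (summable_geometric_of_lt_one hq0.le hq1)
            _ = (1 - q)⁻¹ := tsum_geometric_of_lt_one hq0.le hq1
      _ = C * K ^ 2 := by rw [hCdef]; ring
  have hsummg : Summable g := summable_of_sum_le hgnonneg main
  exact ⟨hsummg, Summable.tsum_le_of_sum_le hsummg main⟩
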